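/- In the monoid generated by e_1, ..., e_{N−1} subject to the relations e_i² = e_i, e_i e_j = e_j e_i for |i−j| ≥ 2, and e_{i+1} e_i e_{i+1} = e_{i+1}, every element equals e_σ := ∏_{i=1}^N e_{i−1} e_{i−2} ⋯ e_{i−c_i} for a unique permutation σ ∈ S_N with code (c_1,...,c_N); consequently the Okada monoid O_N has cardinality N!. -/

import Mathlib

/-- The defining relations of the Okada monoid on `n` generators `e_1, …, e_n`
(indexed by `Fin n`, with `i : Fin n` standing for `e_{i+1}`):
`e_i² = e_i`, `e_i e_j = e_j e_i` for `|i - j| ≥ 2`, and `e_{i+1} e_i e_{i+1} = e_{i+1}`. -/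
inductive OkadaRel (n : ℕ) : FreeMonoid (Fin n) → FreeMonoid (Fin n) → Prop
  | idem (i : Fin n) : OkadaRel n (.of i * .of i) (.of i)
  | comm (i j : Fin n) (h : (i : ℕ) + 2 ≤ (j : ℕ)) :
      OkadaRel n (.of i * .of j) (.of j * .of i)
  | braid (i j : Fin n) (h : (j : ℕ) = (i : ℕ) + 1) :
      OkadaRel n (.of j * .of i * .of j) (.of j)

/-- The Okada monoid on `n` generators: the free monoid on `n` generators modulo the
congruence generated by the Okada relations.  The Okada monoid `O_N` of the paper is
`OkadaMonoid (N - 1)`. -/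
def OkadaMonoid (n : ℕ) := (conGen (OkadaRel n)).Quotient

instance (n : ℕ) : Monoid (OkadaMonoid n) :=
  inferInstanceAs (Monoid (conGen (OkadaRel n)).Quotient)

/-- The generator `e_{i+1}` of the Okada monoid. -/
def okadaGen (n : ℕ) (i : Fin n) : OkadaMonoid n :=
  (conGen (OkadaRel n)).mk' (FreeMonoid.of i)

/-- The generator `e_a` (`1`-indexed) of the Okada monoid, or `1` if out of range. -/
def okadaGenN (n : ℕ) (a : ℕ) : OkadaMonoid n :=
  if h : a - 1 < n then okadaGen n ⟨a - 1, h⟩ else 1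

/-- The (0-indexed) code of a permutation `σ` of `Fin N`:
`c_i = #{ j < i : σ⁻¹ j > σ⁻¹ i }`. -/
def permCode {N : ℕ} (σ : Equiv.Perm (Fin N)) (i : Fin N) : ℕ :=
  (Finset.univ.filter (fun j : Fin N => j < i ∧ σ⁻¹ i < σ⁻¹ j)).card

/-- The element `e_σ := ∏_{i=1}^N e_{i-1} e_{i-2} ⋯ e_{i-c_i}` of the Okada monoid
`O_N = OkadaMonoid (N-1)` associated to the permutation `σ` via its code. -/
def okadaElt {N : ℕ} (σ : Equiv.Perm (Fin N)) : OkadaMonoid (N - 1) :=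
  ((List.finRange N).flatMap
    (fun i => (List.range (permCode σ i)).map
      (fun t => okadaGenN (N - 1) ((i : ℕ) - t)))).prod

namespace Okd

/-- 0-indexed generator, or 1 if out of range -/
noncomputable def gN (m a : ℕ) : OkadaMonoid m :=
  if h : a < m then (conGen (OkadaRel m)).mk' (.of ⟨a, h⟩) else 1

theorem gN_pos {m a : ℕ} (h : a < m) :
    gN m a = (conGen (OkadaRel m)).mk' (.of ⟨a, h⟩) := dif_pos h

theorem gN_neg {m a : ℕ} (h : ¬ a < m) : gN m a = 1 := dif_neg h

theorem rel_mk {m : ℕ} {x y : FreeMonoid (Fin m)} (h : OkadaRel m x y) :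
    (conGen (OkadaRel m)).mk' x = (conGen (OkadaRel m)).mk' y := by
  have : conGen (OkadaRel m) x y := ConGen.Rel.of _ _ h
  exact (Con.eq _).2 this

theorem mk'_mul {m : ℕ} (x y : FreeMonoid (Fin m)) :
    ((conGen (OkadaRel m)).mk' (x * y) : OkadaMonoid m) =
      (conGen (OkadaRel m)).mk' x * (conGen (OkadaRel m)).mk' y := rfl

theorem idemN (m a : ℕ) : gN m a * gN m a = gN m a := by
  by_cases h : a < m
  · rw [gN_pos h]; exact rel_mk (OkadaRel.idem _)
  · rw [gN_neg h]; simp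

theorem commN (m : ℕ) {a b : ℕ} (h : a + 2 ≤ b) : gN m a * gN m b = gN m b * gN m a := by
  by_cases ha : a < m
  · by_cases hb : b < m
    · rw [gN_pos ha, gN_pos hb]
      exact rel_mk (OkadaRel.comm _ _ h)
    · rw [gN_neg hb]; simp
  · rw [gN_neg ha]; simp

theorem braidN (m : ℕ) {a : ℕ} (h : a + 1 < m) :
    gN m (a+1) * gN m a * gN m (a+1) = gN m (a+1) := by
  have ha : a < m := by omega
  rw [gN_pos h, gN_pos ha]
  exact rel_mk (OkadaRel.braid ⟨a, ha⟩ ⟨a+1, h⟩ rfl)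

/-- product of a list of ℕ-indexed generators -/
noncomputable def pN (m : ℕ) (l : List ℕ) : OkadaMonoid m := (l.map (gN m)).prod

@[simp] theorem pN_nil (m : ℕ) : pN m [] = 1 := rfl

theorem pN_append (m : ℕ) (l₁ l₂ : List ℕ) : pN m (l₁ ++ l₂) = pN m l₁ * pN m l₂ := by
  simp [pN]

@[simp] theorem pN_cons (m : ℕ) (a : ℕ) (l : List ℕ) : pN m (a :: l) = gN m a * pN m l := by
  simp [pN]

@[simp] theorem pN_singleton (m a : ℕ) : pN m [a] = gN m a := by simp [pN]

/-- the decreasing run word with bottom `b` and length `l`: letters b+l-1, …, b. -/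
def runL (b l : ℕ) : List ℕ := (List.range' b l).reverse

@[simp] theorem runL_zero (b : ℕ) : runL b 0 = [] := rfl

theorem runL_succ (b l : ℕ) : runL b (l + 1) = (b + l) :: runL b l := by
  simp [runL, List.range'_concat]

theorem runL_split (b l₁ l₂ : ℕ) : runL b (l₁ + l₂) = runL (b + l₂) l₁ ++ runL b l₂ := by
  simp only [runL]
  have h : List.range' b l₂ 1 ++ List.range' (b + 1 * l₂) l₁ 1 = List.range' b (l₁ + l₂) 1 := by
    rw [Nat.add_comm l₁ l₂]; exact List.range'_append
  simp only [one_mul] at h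
  rw [← List.reverse_append, h]

theorem runL_mem {b l u : ℕ} (h : u ∈ runL b l) : b ≤ u ∧ u < b + l := by
  simp only [runL, List.mem_reverse, List.mem_range'_1] at h; omega

/-- monoid-level run -/
noncomputable def rP (m b l : ℕ) : OkadaMonoid m := pN m (runL b l)

@[simp] theorem rP_zero (m b : ℕ) : rP m b 0 = 1 := rfl

theorem rP_succ (m b l : ℕ) : rP m b (l+1) = gN m (b + l) * rP m b l := by
  simp [rP, runL_succ]

theorem rP_split (m b l₁ l₂ : ℕ) : rP m b (l₁ + l₂) = rP m (b + l₂) l₁ * rP m b l₂ := by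
  simp [rP, runL_split, pN_append]

theorem rP_one (m b : ℕ) : rP m b 1 = gN m b := by
  rw [rP_succ]; simp

/-- extension at the bottom -/
theorem rP_ext (m b l : ℕ) : rP m (b+1) l * gN m b = rP m b (l+1) := by
  have h : rP m b (l+1) = rP m (b+1) l * rP m b 1 := rP_split m b l 1
  rw [h, rP_one]

/-- a generator commutes with a run of faraway letters -/
theorem gN_rP_comm (m b l v : ℕ) (h : v + 2 ≤ b ∨ b + l + 1 ≤ v) :
    gN m v * rP m b l = rP m b l * gN m v := by
  induction l with
  | zero => simp
  | succ l ih =>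
    rw [rP_succ, ← mul_assoc, show gN m v * gN m (b+l) = gN m (b+l) * gN m v by
        rcases h with h | h
        · exact commN m (by omega)
        · exact (commN m (by omega)).symm,
      mul_assoc, ih (by omega), mul_assoc]

/-- runs with separated supports commute -/
theorem rP_rP_comm (m b₁ l₁ b₂ l₂ : ℕ) (h : b₁ + l₁ + 1 ≤ b₂) :
    rP m b₁ l₁ * rP m b₂ l₂ = rP m b₂ l₂ * rP m b₁ l₁ := by
  induction l₁ with
  | zero => simp
  | succ l ih =>
    rw [rP_succ, mul_assoc, ih (by omega), ← mul_assoc,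
      gN_rP_comm m b₂ l₂ (b₁ + l) (Or.inl (by omega)), mul_assoc]

/-- absorb the bottom letter -/
theorem rP_idem (m b l : ℕ) (hl : 1 ≤ l) : rP m b l * gN m b = rP m b l := by
  obtain ⟨l, rfl⟩ : ∃ k, l = k + 1 := ⟨l - 1, by omega⟩
  have h : rP m b (l+1) = rP m (b+1) l * rP m b 1 := rP_split m b l 1
  rw [h, rP_one, mul_assoc, idemN]

/-- core absorption computation, subtraction-free -/
theorem rP_absorb (m b k₁ k₂ : ℕ) (hm : b + k₂ + 1 < m) :
    rP m b (k₂+2+k₁) * gN m (b+k₂+1) = rP m (b+k₂+1) (k₁+1) * rP m b k₂ := by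
  have h1 : rP m b (k₂+2+k₁) = rP m (b+k₂+2) k₁ * rP m b (k₂+2) := by
    have := rP_split m b k₁ (k₂+2)
    rw [show k₁ + (k₂+2) = k₂+2+k₁ by omega] at this
    rw [this, show b + (k₂+2) = b + k₂ + 2 by omega]
  have h2 : rP m b (k₂+2) = gN m (b+k₂+1) * (gN m (b+k₂) * rP m b k₂) := by
    rw [rP_succ, rP_succ]
    ring_nf
  rw [h1, h2]
  have h3 : rP m b k₂ * gN m (b+k₂+1) = gN m (b+k₂+1) * rP m b k₂ :=
    (gN_rP_comm m b k₂ (b+k₂+1) (Or.inr (by omega))).symm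
  rw [mul_assoc, mul_assoc, mul_assoc, h3, ← mul_assoc (gN m (b+k₂)), ← mul_assoc (gN m (b+k₂+1)),
    ← mul_assoc (gN m (b+k₂+1))]
  have hbraid : gN m (b+k₂+1) * gN m (b+k₂) * gN m (b+k₂+1) = gN m (b+k₂+1) := braidN m hm
  rw [hbraid, ← mul_assoc, rP_ext]

/-- master absorption lemma -/
theorem rP_master (m b l v : ℕ) (hbv : b ≤ v) (hv : v + 1 ≤ b + l) (hm : v < m) :
    rP m b l * gN m v = rP m v (b + l - v) * rP m b (v - 1 - b) := by
  rcases Nat.eq_or_lt_of_le hbv with rfl | hlt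
  · have h1 : rP m b l * gN m b = rP m b l := rP_idem m b l (by omega)
    rw [h1, show b - 1 - b = 0 by omega, rP_zero, mul_one]
    congr 1
    omega
  · have key := rP_absorb m b (b + l - v - 1) (v - 1 - b) (by omega)
    rw [show v - 1 - b + 2 + (b + l - v - 1) = l by omega,
        show b + (v - 1 - b) + 1 = v by omega] at key
    rw [show b + l - v = (b + l - v - 1) + 1 by omega, key]



/-- right action of the generator `v` (a generator of `OkadaMonoid (m+1)`) on pairs
`(x, c) : OkadaMonoid m × ℕ` representing `ι x * (top block of length c)`. -/
noncomputable def act (m v : ℕ) (p : OkadaMonoid m × ℕ) : OkadaMonoid m × ℕ :=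
  if v + 2 ≤ m + 1 - p.2 then (p.1 * gN m v, p.2)
  else if v + 1 = m + 1 - p.2 then (p.1, p.2 + 1)
  else if v = m + 1 - p.2 then p
  else (p.1 * rP m (m + 1 - p.2) (v - 1 - (m + 1 - p.2)), m + 1 - v)

theorem act_eq_comm (m v : ℕ) (x : OkadaMonoid m) (c : ℕ) (h : v + 2 ≤ m + 1 - c) :
    act m v (x, c) = (x * gN m v, c) := by
  unfold act; rw [if_pos h]

theorem act_eq_ext (m v : ℕ) (x : OkadaMonoid m) (c : ℕ) (h : v + 1 = m + 1 - c) :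
    act m v (x, c) = (x, c + 1) := by
  unfold act
  rw [if_neg (by simp only []; omega), if_pos h]

theorem act_eq_abs (m v : ℕ) (x : OkadaMonoid m) (c : ℕ) (h : v = m + 1 - c) :
    act m v (x, c) = (x, c) := by
  unfold act
  rw [if_neg (by simp only []; omega), if_neg (by simp only []; omega), if_pos h]

theorem act_eq_trunc (m v : ℕ) (x : OkadaMonoid m) (c : ℕ) (h : m + 1 - c < v) :
    act m v (x, c) = (x * rP m (m + 1 - c) (v - 1 - (m + 1 - c)), m + 1 - v) := by
  unfold act
  rw [if_neg (by simp only []; omega), if_neg (by simp only []; omega),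
    if_neg (by simp only []; omega)]

theorem actR1 (m v : ℕ) (hv : v ≤ m) (p : OkadaMonoid m × ℕ) : act m v (act m v p) = act m v p := by
  obtain ⟨x, c⟩ := p
  rcases Nat.lt_trichotomy (v + 1) (m + 1 - c) with h | h | h
  · rw [act_eq_comm m v x c (by omega), act_eq_comm m v _ c (by omega), mul_assoc, idemN]
  · rw [act_eq_ext m v x c (by omega), act_eq_abs m v x (c+1) (by omega)]
  · rcases Nat.lt_or_ge (m + 1 - c) v with h2 | h2
    · rw [act_eq_trunc m v x c h2, act_eq_abs m v _ (m+1-v) (by omega)]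
    · rw [act_eq_abs m v x c (by omega), act_eq_abs m v x c (by omega)]

theorem actR2 (m v w : ℕ) (hvw : v + 2 ≤ w) (hw : w ≤ m) (p : OkadaMonoid m × ℕ) :
    act m w (act m v p) = act m v (act m w p) := by
  obtain ⟨x, c⟩ := p
  rcases Nat.lt_trichotomy (w + 1) (m + 1 - c) with hb | hb | hb
  · -- (a) β ≥ w+2
    rw [act_eq_comm m v x c (by omega), act_eq_comm m w _ c (by omega),
        act_eq_comm m w x c (by omega), act_eq_comm m v _ c (by omega),
        mul_assoc, mul_assoc, commN m hvw]
  · -- (b) β = w+1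
    rw [act_eq_comm m v x c (by omega), act_eq_ext m w _ c (by omega),
        act_eq_ext m w x c (by omega), act_eq_comm m v x (c+1) (by omega)]
  · -- β ≤ w
    rcases Nat.eq_or_lt_of_le (Nat.le_of_lt_succ hb) with hb2 | hb2
    · -- (c) β = w
      rw [act_eq_abs m w x c (by omega), act_eq_comm m v x c (by omega),
          act_eq_abs m w _ c (by omega)]
    · -- β < w : act w is trunc
      rcases Nat.lt_trichotomy (v + 1) (m + 1 - c) with hv | hv | hv
      · -- (d) v+2 ≤ β
        rw [act_eq_comm m v x c (by omega), act_eq_trunc m w _ c (by omega),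
            act_eq_trunc m w x c (by omega), act_eq_comm m v _ (m+1-w) (by omega),
            mul_assoc, mul_assoc, gN_rP_comm m _ _ v (Or.inl (by omega))]
      · -- (e) β = v+1
        rw [act_eq_ext m v x c (by omega), act_eq_trunc m w x (c+1) (by omega),
            act_eq_trunc m w x c (by omega), act_eq_comm m v _ (m+1-w) (by omega)]
        rw [show m + 1 - (c+1) = v by omega, show m + 1 - c = v + 1 by omega]
        have he : rP m (v+1) (w - 1 - (v+1)) * gN m v = rP m v (w - 1 - v) := by
          have h2 := rP_ext m v (w - 1 - (v+1))
          rw [h2]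
          rw [show w - 1 - (v+1) + 1 = w - 1 - v by omega]
        rw [mul_assoc, he]
      · -- β ≤ v
        rcases Nat.eq_or_lt_of_le (Nat.le_of_lt_succ hv) with hv2 | hv2
        · -- (f) β = v
          rw [act_eq_abs m v x c (by omega), act_eq_trunc m w x c (by omega),
              act_eq_comm m v _ (m+1-w) (by omega),
              show m + 1 - c = v by omega, mul_assoc,
              rP_idem m v (w - 1 - v) (by omega)]
        · -- (g) β < v
          rw [act_eq_trunc m v x c (by omega),
              act_eq_trunc m w _ (m+1-v) (by omega),
              act_eq_trunc m w x c (by omega),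
              act_eq_comm m v _ (m+1-w) (by omega),
              show m + 1 - (m + 1 - v) = v by omega]
          have hmast := rP_master m (m + 1 - c) (w - 1 - (m + 1 - c)) v
            (by omega) (by omega) (by omega)
          rw [show m + 1 - c + (w - 1 - (m + 1 - c)) - v = w - 1 - v by omega] at hmast
          rw [mul_assoc, mul_assoc, hmast,
            rP_rP_comm m (m+1-c) (v - 1 - (m+1-c)) v (w-1-v) (by omega)]

theorem actR3 (m v : ℕ) (hv : v + 1 ≤ m) (p : OkadaMonoid m × ℕ) :
    act m (v+1) (act m v (act m (v+1) p)) = act m (v+1) p := by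
  obtain ⟨x, c⟩ := p
  rcases Nat.lt_trichotomy (v + 2) (m + 1 - c) with hb | hb | hb
  · -- (a) β ≥ w+2
    rw [act_eq_comm m (v+1) x c (by omega), act_eq_comm m v _ c (by omega),
        act_eq_comm m (v+1) _ c (by omega),
        mul_assoc, mul_assoc, ← mul_assoc (gN m (v+1)), braidN m (by omega)]
  · -- (b) β = v+2
    rw [act_eq_ext m (v+1) x c (by omega), act_eq_ext m v x (c+1) (by omega),
        act_eq_trunc m (v+1) x (c+2) (by omega),
        show m + 1 - (c+2) = v by omega,
        show v + 1 - 1 - v = 0 by omega, rP_zero, mul_one]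
    rw [show c + 1 = m + 1 - (v+1) by omega]
  · -- β ≤ v+1
    rcases Nat.lt_trichotomy (v+1) (m + 1 - c) with hv2 | hv2 | hv2
    · omega
    · -- (c) β = v+1
      rw [act_eq_abs m (v+1) x c (by omega), act_eq_ext m v x c (by omega),
          act_eq_trunc m (v+1) x (c+1) (by omega),
          show m + 1 - (c+1) = v by omega, show v + 1 - 1 - v = 0 by omega, rP_zero, mul_one]
      rw [show c = m + 1 - (v+1) by omega]
    · -- (d) β ≤ v
      rw [act_eq_trunc m (v+1) x c (by omega)]
      rw [act_eq_ext m v _ (m+1-(v+1)) (by omega)]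
      rw [act_eq_trunc m (v+1) _ (m+1-(v+1)+1) (by omega),
          show m + 1 - (m + 1 - (v+1) + 1) = v by omega,
          show v + 1 - 1 - v = 0 by omega, rP_zero, mul_one]



noncomputable def incl (m : ℕ) : OkadaMonoid m →* OkadaMonoid (m+1) :=
  Con.lift _ (FreeMonoid.lift (fun i : Fin m => gN (m+1) i.val)) (by
    apply Con.conGen_le.mpr
    intro x y h
    rw [Con.ker_rel]
    cases h with
    | idem i => simp only [map_mul, FreeMonoid.lift_eval_of]; exact idemN _ _
    | comm i j hij => simp only [map_mul, FreeMonoid.lift_eval_of]; exact commN _ hij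
    | braid i j hij =>
        simp only [map_mul, FreeMonoid.lift_eval_of, hij]
        exact braidN (m+1) (by have := j.isLt; omega))

theorem incl_gN (m a : ℕ) (h : a < m) : incl m (gN m a) = gN (m+1) a := by
  have h1 : gN m a = (conGen (OkadaRel m)).mk' (FreeMonoid.of ⟨a, h⟩) := by
    rw [gN_pos h]
  have h2 : incl m ((conGen (OkadaRel m)).mk' (FreeMonoid.of ⟨a, h⟩))
      = (FreeMonoid.lift (fun i : Fin m => gN (m+1) i.val)) (FreeMonoid.of ⟨a, h⟩) := rfl
  rw [h1, h2, FreeMonoid.lift_eval_of]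

theorem incl_pN (m : ℕ) (l : List ℕ) (h : ∀ u ∈ l, u < m) :
    incl m (pN m l) = pN (m+1) l := by
  induction l with
  | nil => simp [pN]
  | cons a l ih =>
    rw [pN_cons, map_mul, incl_gN m a (h a (by simp)), ih (fun u hu => h u (by simp [hu])),
      pN_cons]

theorem incl_rP (m b l : ℕ) (h : b + l ≤ m) : incl m (rP m b l) = rP (m+1) b l := by
  unfold rP
  exact incl_pN m _ (fun u hu => by have := runL_mem hu; omega)

/-- the free-monoid action hom -/
noncomputable def endOp (m : ℕ) :
    FreeMonoid (Fin (m+1)) →* (Function.End (OkadaMonoid m × ℕ))ᵐᵒᵖ :=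
  FreeMonoid.lift (fun a => MulOpposite.op (act m a.val))

theorem endOp_cond (m : ℕ) : ∀ x y, OkadaRel (m+1) x y →
    (Con.ker (endOp m)) x y := by
  intro x y h
  rw [Con.ker_rel]
  cases h with
  | idem i =>
      simp only [map_mul, endOp, FreeMonoid.lift_eval_of, ← MulOpposite.op_mul]
      refine MulOpposite.unop_injective (funext fun p => ?_)
      exact actR1 m i.val (by have := i.isLt; omega) p
  | comm i j hij =>
      simp only [map_mul, endOp, FreeMonoid.lift_eval_of, ← MulOpposite.op_mul]
      refine MulOpposite.unop_injective (funext fun p => ?_)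
      exact actR2 m i.val j.val hij (by have := j.isLt; omega) p
  | braid i j hij =>
      simp only [map_mul, endOp, FreeMonoid.lift_eval_of, ← MulOpposite.op_mul]
      refine MulOpposite.unop_injective (funext fun p => ?_)
      have h3 := actR3 m i.val (by have := j.isLt; omega) p
      rw [show i.val + 1 = j.val from hij.symm] at h3
      exact h3

noncomputable def Amap (m : ℕ) :
    OkadaMonoid (m+1) →* (Function.End (OkadaMonoid m × ℕ))ᵐᵒᵖ :=
  Con.lift _ (endOp m) (Con.conGen_le.mpr (endOp_cond m))

noncomputable def Psi (m : ℕ) (x : OkadaMonoid (m+1)) : OkadaMonoid m × ℕ :=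
  ((Amap m) x).unop (1, 0)

/-- left-fold action of a list of letters -/
noncomputable def ActL (m : ℕ) (l : List ℕ) (p : OkadaMonoid m × ℕ) : OkadaMonoid m × ℕ :=
  l.foldl (fun q v => act m v q) p

@[simp] theorem ActL_nil (m : ℕ) (p : OkadaMonoid m × ℕ) : ActL m [] p = p := rfl

theorem ActL_cons (m : ℕ) (v : ℕ) (l : List ℕ) (p) :
    ActL m (v :: l) p = ActL m l (act m v p) := rfl

theorem ActL_append (m : ℕ) (l₁ l₂ : List ℕ) (p) :
    ActL m (l₁ ++ l₂) p = ActL m l₂ (ActL m l₁ p) := List.foldl_append ..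

theorem Amap_gN (m u : ℕ) (hu : u < m + 1) (p : OkadaMonoid m × ℕ) :
    ((Amap m) (gN (m+1) u)).unop p = act m u p := by
  have h1 : gN (m+1) u = (conGen (OkadaRel (m+1))).mk' (FreeMonoid.of ⟨u, hu⟩) := by
    rw [gN_pos hu]
  have h2 : (Amap m) ((conGen (OkadaRel (m+1))).mk' (FreeMonoid.of ⟨u, hu⟩))
      = (endOp m) (FreeMonoid.of ⟨u, hu⟩) := rfl
  rw [h1, h2]
  unfold endOp
  rw [FreeMonoid.lift_eval_of]
  rfl

theorem Amap_pN (m : ℕ) (l : List ℕ) (h : ∀ u ∈ l, u < m + 1) (p : OkadaMonoid m × ℕ) :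
    ((Amap m) (pN (m+1) l)).unop p = ActL m l p := by
  induction l generalizing p with
  | nil => simp only [pN, List.map_nil, List.prod_nil, map_one]; rfl
  | cons a l ih =>
    rw [pN_cons, map_mul, MulOpposite.unop_mul]
    show ((Amap m) (pN (m+1) l)).unop (((Amap m) (gN (m+1) a)).unop p) = _
    rw [Amap_gN m a (h a (by simp)), ih (fun u hu => h u (by simp [hu])), ActL_cons]

theorem Psi_pN (m : ℕ) (l : List ℕ) (h : ∀ u ∈ l, u < m + 1) :
    Psi m (pN (m+1) l) = ActL m l (1, 0) := Amap_pN m l h (1, 0)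

/-- every element is a product of generators -/
theorem exists_pN (m : ℕ) (x : OkadaMonoid m) :
    ∃ l : List ℕ, (∀ u ∈ l, u < m) ∧ x = pN m l := by
  obtain ⟨w, rfl⟩ := Con.mk'_surjective (c := conGen (OkadaRel m)) x
  refine ⟨w.toList.map Fin.val, by simp, ?_⟩
  have key : ∀ lw : List (Fin m),
      (conGen (OkadaRel m)).mk' (FreeMonoid.ofList lw) = pN m (lw.map Fin.val) := by
    intro lw
    induction lw with
    | nil => rfl
    | cons a lw ih =>
      have : FreeMonoid.ofList (a :: lw) = FreeMonoid.of a * FreeMonoid.ofList lw := rfl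
      rw [this, mk'_mul, ih, List.map_cons, pN_cons]
      congr 1
      rw [gN_pos a.isLt]
  have hw : w = FreeMonoid.ofList w.toList := rfl
  conv_lhs => rw [hw]
  exact key w.toList

/-- the pair interpretation map -/
noncomputable def phi (m : ℕ) (p : OkadaMonoid m × ℕ) : OkadaMonoid (m+1) :=
  incl m p.1 * rP (m+1) (m + 1 - p.2) p.2

theorem phi_key (m v : ℕ) (hv : v ≤ m) (x : OkadaMonoid m) (c : ℕ) (hc : c ≤ m + 1) :
    phi m (act m v (x, c)) = phi m (x, c) * gN (m+1) v := by
  rcases Nat.lt_trichotomy (v + 1) (m + 1 - c) with h | h | h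
  · -- comm
    rw [act_eq_comm m v x c (by omega)]
    unfold phi
    simp only []
    rw [map_mul, incl_gN m v (by omega), mul_assoc, mul_assoc,
      gN_rP_comm (m+1) (m+1-c) c v (Or.inl (by omega))]
  · -- ext
    rw [act_eq_ext m v x c (by omega)]
    unfold phi
    simp only []
    rw [show m + 1 - (c+1) = v by omega]
    have he : rP (m+1) (v+1) c * gN (m+1) v = rP (m+1) v (c+1) := rP_ext (m+1) v c
    rw [← he, show v + 1 = m + 1 - c by omega, mul_assoc]
  · rcases Nat.lt_or_ge (m + 1 - c) v with h2 | h2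
    · -- trunc
      rw [act_eq_trunc m v x c h2]
      unfold phi
      simp only []
      rw [map_mul, incl_rP m (m+1-c) (v - 1 - (m+1-c)) (by omega),
        show m + 1 - (m + 1 - v) = v by omega]
      have hmast := rP_master (m+1) (m+1-c) c v (by omega) (by omega) (by omega)
      rw [show m + 1 - c + c - v = m + 1 - v by omega] at hmast
      rw [mul_assoc, mul_assoc, hmast,
        rP_rP_comm (m+1) (m+1-c) (v - 1 - (m+1-c)) v (m+1-v) (by omega)]
    · -- abs
      rw [act_eq_abs m v x c (by omega)]
      unfold phi
      simp only []
      rw [show v = m + 1 - c by omega, mul_assoc, rP_idem (m+1) (m+1-c) c (by omega)]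

theorem act_snd_le (m v : ℕ) (hv : v ≤ m) (p : OkadaMonoid m × ℕ) (hp : p.2 ≤ m + 1) :
    (act m v p).2 ≤ m + 1 := by
  obtain ⟨x, c⟩ := p
  rcases Nat.lt_trichotomy (v + 1) (m + 1 - c) with h | h | h
  · rw [act_eq_comm m v x c (by omega)]; exact hp
  · rw [act_eq_ext m v x c (by omega)]; simp only []; omega
  · rcases Nat.lt_or_ge (m + 1 - c) v with h2 | h2
    · rw [act_eq_trunc m v x c h2]; simp only []; omega
    · rw [act_eq_abs m v x c (by omega)]; exact hp

theorem phi_pN (m : ℕ) (l : List ℕ) (h : ∀ u ∈ l, u < m + 1) :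
    pN (m+1) l = phi m (ActL m l (1, 0)) ∧ (ActL m l (1, 0)).2 ≤ m + 1 := by
  induction l using List.reverseRecOn with
  | nil =>
    constructor
    · unfold phi
      simp [rP]
    · simp
  | append_singleton l v ih =>
    obtain ⟨ih1, ih2⟩ := ih (fun u hu => h u (by simp [hu]))
    have hvm : v ≤ m := by have := h v (by simp); omega
    constructor
    · rw [pN_append, pN_singleton, ih1, ActL_append]
      have := phi_key m v hvm (ActL m l (1,0)).1 (ActL m l (1,0)).2 ih2
      rw [← this]
      rfl
    · rw [ActL_append]
      show (act m v (ActL m l (1,0))).2 ≤ m + 1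
      exact act_snd_le m v hvm _ ih2

/-- the (candidate) normal form word of a code -/
def wordC (c : ℕ → ℕ) (k : ℕ) : List ℕ :=
  (List.range k).flatMap (fun i => runL (i - c i) (c i))

theorem wordC_succ (c : ℕ → ℕ) (k : ℕ) :
    wordC c (k+1) = wordC c k ++ runL (k - c k) (c k) := by
  unfold wordC
  rw [List.range_succ, List.flatMap_append]
  simp

theorem wordC_mem (c : ℕ → ℕ) (k : ℕ) (hval : ∀ i < k, c i ≤ i) :
    ∀ u ∈ wordC c k, u + 2 ≤ k := by
  intro u hu
  unfold wordC at hu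
  rw [List.mem_flatMap] at hu
  obtain ⟨i, hi, hu⟩ := hu
  rw [List.mem_range] at hi
  have := runL_mem hu
  have := hval i hi
  omega

theorem wordC_congr (c c' : ℕ → ℕ) (k : ℕ) (h : ∀ i < k, c i = c' i) :
    wordC c k = wordC c' k := by
  induction k with
  | zero => rfl
  | succ k ih =>
    rw [wordC_succ, wordC_succ, ih (fun i hi => h i (by omega)), h k (by omega)]

noncomputable def gw (m : ℕ) (c : ℕ → ℕ) : OkadaMonoid m := pN m (wordC c (m+1))



theorem gw_succ (m : ℕ) (c : ℕ → ℕ) (hval : ∀ i, c i ≤ i) :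
    gw (m+1) c = incl m (gw m c) * rP (m+1) (m + 1 - c (m+1)) (c (m+1)) := by
  unfold gw
  rw [wordC_succ, pN_append]
  congr 1
  exact (incl_pN m _ (fun u hu => by
    have := wordC_mem c (m+1) (fun i _ => hval i) u hu; omega)).symm

theorem ActL_low (m : ℕ) (l : List ℕ) (h : ∀ u ∈ l, u + 2 ≤ m + 1) (y : OkadaMonoid m) :
    ActL m l (y, 0) = (y * pN m l, 0) := by
  induction l generalizing y with
  | nil => simp
  | cons u l ih =>
    rw [ActL_cons, act_eq_comm m u y 0 (by have := h u (by simp); omega),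
      ih (fun w hw => h w (by simp [hw])), pN_cons, mul_assoc]

theorem ActL_run (m : ℕ) (l b : ℕ) (y : OkadaMonoid m) (h : b + l ≤ m + 1) :
    ActL m (runL b l) (y, m + 1 - (b + l)) = (y, m + 1 - b) := by
  induction l with
  | zero => simp
  | succ l ih =>
    rw [runL_succ, ActL_cons, act_eq_ext m (b+l) y (m+1-(b+(l+1))) (by omega),
      show m + 1 - (b + (l + 1)) + 1 = m + 1 - (b + l) by omega, ih (by omega)]

theorem Psi_gw (m : ℕ) (c : ℕ → ℕ) (hval : ∀ i, c i ≤ i) :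
    Psi m (gw (m+1) c) = (gw m c, c (m+1)) := by
  unfold gw
  rw [Psi_pN m _ (fun u hu => by
    have := wordC_mem c (m+2) (fun i _ => hval i) u hu; omega)]
  rw [wordC_succ, ActL_append,
    ActL_low m _ (fun u hu => wordC_mem c (m+1) (fun i _ => hval i) u hu) 1, one_mul]
  have h0 : (0 : ℕ) = m + 1 - (m + 1 - c (m+1) + c (m+1)) := by
    have := hval (m+1); omega
  rw [h0, ActL_run m (c (m+1)) (m+1-c (m+1)) _ (by have := hval (m+1); omega),
    show m + 1 - (m + 1 - c (m+1)) = c (m+1) by have := hval (m+1); omega]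

theorem main (m : ℕ) :
    (∀ x : OkadaMonoid m, ∃ c : ℕ → ℕ, (∀ i, c i ≤ i) ∧ x = gw m c) ∧
    (∀ c c' : ℕ → ℕ, (∀ i, c i ≤ i) → (∀ i, c' i ≤ i) → gw m c = gw m c' →
      ∀ i ≤ m, c i = c' i) := by
  induction m with
  | zero =>
    constructor
    · intro x
      obtain ⟨l, hl, rfl⟩ := exists_pN 0 x
      have hnil : l = [] := by
        cases l with
        | nil => rfl
        | cons a t => exact absurd (hl a (by simp)) (by omega)
      subst hnil
      exact ⟨fun _ => 0, fun i => Nat.zero_le i, rfl⟩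
    · intro c c' h h' _ i hi
      have h1 := h i
      have h2 := h' i
      omega
  | succ m ih =>
    obtain ⟨ihS, ihI⟩ := ih
    constructor
    · intro x
      obtain ⟨l, hl, rfl⟩ := exists_pN (m+1) x
      obtain ⟨h1, h2⟩ := phi_pN m l (fun u hu => hl u hu)
      obtain ⟨c', hc', hy⟩ := ihS (ActL m l (1,0)).1
      have hval2 : ∀ i, (Function.update c' (m+1) (ActL m l (1,0)).2) i ≤ i := by
        intro i
        rcases eq_or_ne i (m+1) with rfl | hne
        · rw [Function.update_self]; exact h2
        · rw [Function.update_of_ne hne]; exact hc' i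
      refine ⟨Function.update c' (m+1) (ActL m l (1,0)).2, hval2, ?_⟩
      · rw [h1]
        unfold phi
        rw [hy, gw_succ m _ hval2, Function.update_self]
        have hgw : gw m (Function.update c' (m+1) (ActL m l (1,0)).2) = gw m c' := by
          unfold gw
          rw [wordC_congr _ c' (m+1) (fun i hi => Function.update_of_ne (by omega) _ _)]
        rw [hgw]
    · intro c c' h h' heq i hi
      have hp1 := Psi_gw m c h
      have hp2 := Psi_gw m c' h'
      rw [heq, hp2] at hp1
      rw [Prod.mk.injEq] at hp1
      obtain ⟨e1', e2'⟩ := hp1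
      have e1 : gw m c = gw m c' := e1'.symm
      have e2 : c (m+1) = c' (m+1) := e2'.symm
      rcases Nat.lt_or_ge i (m+1) with hlt | hge
      · exact ihI c c' h h' e1 i (by omega)
      · have : i = m + 1 := by omega
        rw [this]; exact e2





theorem card_filter_last (N : ℕ) (P : Fin (N+1) → Prop) [DecidablePred P]
    (hl : ¬ P (Fin.last N)) :
    (Finset.univ.filter P).card =
      (Finset.univ.filter (fun j : Fin N => P j.castSucc)).card := by
  rw [Fin.univ_castSuccEmb, Finset.filter_cons, if_neg hl, Finset.filter_map,
    Finset.card_map]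
  rfl

theorem card_filter_perm {N : ℕ} (e : Equiv.Perm (Fin N)) (P : Fin N → Prop)
    [DecidablePred P] :
    (Finset.univ.filter (fun j => P (e j))).card = (Finset.univ.filter P).card := by
  apply Finset.card_bij (fun a _ => e a)
  · intro a ha
    simp only [Finset.mem_filter, Finset.mem_univ, true_and] at ha ⊢
    exact ha
  · intro a _ b _ hab
    exact e.injective hab
  · intro b hb
    simp only [Finset.mem_filter, Finset.mem_univ, true_and] at hb ⊢
    exact ⟨e.symm b, by simpa using hb, by simp⟩

theorem card_filter_le_fin (N a : ℕ) (ha : a ≤ N) :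
    (Finset.univ.filter (fun y : Fin N => a ≤ (y : ℕ))).card = N - a := by
  rcases Nat.eq_or_lt_of_le ha with h | hlt
  · have hempty : (Finset.univ.filter (fun y : Fin N => a ≤ (y : ℕ))) = ∅ := by
      apply Finset.eq_empty_of_forall_notMem
      intro y hy
      simp only [Finset.mem_filter] at hy
      have := y.isLt
      omega
    rw [hempty, Finset.card_empty]
    omega
  · have : (Finset.univ.filter (fun y : Fin N => a ≤ (y : ℕ))) = Finset.Ici ⟨a, hlt⟩ := by
      ext y
      simp [Finset.mem_Ici, Fin.le_def]
    rw [this, Fin.card_Ici]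

theorem permCode_le {N : ℕ} (σ : Equiv.Perm (Fin N)) (i : Fin N) : permCode σ i ≤ i.val := by
  unfold permCode
  calc (Finset.univ.filter (fun j : Fin N => j < i ∧ σ⁻¹ i < σ⁻¹ j)).card
      ≤ (Finset.univ.filter (fun j : Fin N => j < i)).card := by
        apply Finset.card_le_card
        intro j hj
        simp only [Finset.mem_filter] at hj ⊢
        exact ⟨hj.1, hj.2.1⟩
    _ = (Finset.Iio i).card := by
        congr 1
        ext j
        simp [Finset.mem_Iio]
    _ = i.val := Fin.card_Iio i

theorem lehmer (N : ℕ) : ∀ (c : ℕ → ℕ), (∀ i, c i ≤ i) →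
    ∃ σ : Equiv.Perm (Fin N), ∀ i : Fin N, permCode σ i = c i.val := by
  induction N with
  | zero => exact fun c _ => ⟨1, fun i => i.elim0⟩
  | succ N ih =>
    intro c hc
    obtain ⟨σ', hσ'⟩ := ih c hc
    have hcN := hc N
    have hk : N - c N < N + 1 := by omega
    set k : Fin (N+1) := ⟨N - c N, hk⟩ with hkdef
    set f : Fin (N+1) → Fin (N+1) :=
      fun i => Fin.lastCases k (fun j => k.succAbove (σ'⁻¹ j)) i with hf
    have hfl : f (Fin.last N) = k := by simp [hf]
    have hfc : ∀ j : Fin N, f j.castSucc = k.succAbove (σ'⁻¹ j) := by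
      intro j; simp [hf]
    have hinj : Function.Injective f := by
      intro i1 i2 he
      induction i1 using Fin.lastCases with
      | last =>
        induction i2 using Fin.lastCases with
        | last => rfl
        | cast j2 =>
          rw [hfl, hfc] at he
          exact absurd he.symm (Fin.succAbove_ne k _)
      | cast j1 =>
        induction i2 using Fin.lastCases with
        | last =>
          rw [hfl, hfc] at he
          exact absurd he (Fin.succAbove_ne k _)
        | cast j2 =>
          rw [hfc, hfc] at he
          have h1 := Fin.succAbove_right_injective (p := k) he
          have h2 := σ'⁻¹.injective h1
          rw [h2]
    set τ : Equiv.Perm (Fin (N+1)) := Equiv.ofBijective f (Finite.injective_iff_bijective.mp hinj)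
      with hτ
    have hτap : ∀ i, (τ⁻¹)⁻¹ i = f i := fun i => rfl
    refine ⟨τ⁻¹, ?_⟩
    intro i
    induction i using Fin.lastCases with
    | last =>
      unfold permCode
      rw [Fin.val_last]
      have hstep1 : (Finset.univ.filter
          (fun j : Fin (N+1) => j < Fin.last N ∧ (τ⁻¹)⁻¹ (Fin.last N) < (τ⁻¹)⁻¹ j)).card =
          (Finset.univ.filter (fun j : Fin N => k ≤ (σ'⁻¹ j).castSucc)).card := by
        rw [card_filter_last N _ (by simp)]
        refine congrArg Finset.card (Finset.filter_congr ?_)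
        intro j _
        rw [hτap, hτap, hfl, hfc]
        constructor
        · intro hcond
          exact (Fin.lt_succAbove_iff_le_castSucc k (σ'⁻¹ j)).mp hcond.2
        · intro hcond
          exact ⟨Fin.castSucc_lt_last j, (Fin.lt_succAbove_iff_le_castSucc k (σ'⁻¹ j)).mpr hcond⟩
      rw [hstep1, card_filter_perm σ'⁻¹ (fun y => k ≤ y.castSucc)]
      have : (Finset.univ.filter (fun y : Fin N => k ≤ y.castSucc)).card =
          (Finset.univ.filter (fun y : Fin N => (N - c N) ≤ (y : ℕ))).card := by
        refine congrArg Finset.card (Finset.filter_congr ?_)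
        intro y _
        rw [Fin.le_def]
        simp [hkdef]
      rw [this, card_filter_le_fin N (N - c N) (by omega)]
      omega
    | cast i0 =>
      unfold permCode
      rw [Fin.coe_castSucc]
      have hstep1 : (Finset.univ.filter
          (fun j : Fin (N+1) => j < i0.castSucc ∧ (τ⁻¹)⁻¹ i0.castSucc < (τ⁻¹)⁻¹ j)).card =
          (Finset.univ.filter (fun j : Fin N => j < i0 ∧ σ'⁻¹ i0 < σ'⁻¹ j)).card := by
        rw [card_filter_last N _ (by
          intro hcon
          exact absurd hcon.1 (by
            have := Fin.castSucc_lt_last i0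
            exact not_lt.mpr (le_of_lt this)))]
        refine congrArg Finset.card (Finset.filter_congr ?_)
        intro j _
        rw [hτap, hτap, hfc, hfc, Fin.castSucc_lt_castSucc_iff,
          Fin.succAbove_lt_succAbove_iff]
      rw [hstep1]
      exact hσ' i0



theorem rev_range' : ∀ (l b : ℕ),
    (List.range' b l).reverse = (List.range l).map (fun t => b + l - 1 - t) := by
  intro l
  induction l with
  | zero => intro b; simp
  | succ l ih =>
    intro b
    rw [List.range'_succ, List.reverse_cons, ih (b+1), List.range_succ, List.map_append]
    simp only [List.map_cons, List.map_nil]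
    congr 1
    · apply List.map_congr_left
      intro t ht
      rw [List.mem_range] at ht
      omega
    · congr 1
      omega

theorem runL_eq (i c : ℕ) (h : c ≤ i) :
    runL (i - c) c = (List.range c).map (fun t => i - 1 - t) := by
  unfold runL
  rw [rev_range']
  apply List.map_congr_left
  intro t ht
  rw [List.mem_range] at ht
  omega

theorem flatMap_finRange {α : Type} (k : ℕ) (F : Fin k → List α) (G : ℕ → List α)
    (h : ∀ i : Fin k, F i = G i.val) :
    (List.finRange k).flatMap F = (List.range k).flatMap G := by
  rw [List.flatMap_def, List.flatMap_def]
  congr 1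
  apply List.ext_getElem
  · simp
  · intro idx h1 h2
    simp only [List.getElem_map]
    rw [List.getElem_finRange, List.getElem_range, h]
    simp

theorem okadaElt_eq_gw (n : ℕ) (σ : Equiv.Perm (Fin (n+1))) :
    okadaElt σ = gw n (fun i => if h : i < n+1 then permCode σ ⟨i, h⟩ else 0) := by
  set c : ℕ → ℕ := fun i => if h : i < n+1 then permCode σ ⟨i, h⟩ else 0 with hc
  show (((List.finRange (n+1)).flatMap
      (fun i => (List.range (permCode σ i)).map
        (fun t => okadaGenN n ((i : ℕ) - t))))).prod = pN n (wordC c (n+1))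
  unfold pN
  congr 1
  have step1 : (List.finRange (n+1)).flatMap
      (fun i => (List.range (permCode σ i)).map (fun t => okadaGenN n ((i : ℕ) - t)))
      = (List.range (n+1)).flatMap
        (fun i => (List.range (c i)).map (fun t => gN n (i - 1 - t))) := by
    apply flatMap_finRange
    intro i
    have hci : c i.val = permCode σ i := by
      rw [hc]
      simp only [dif_pos i.isLt, Fin.eta]
    rw [hci]
    apply List.map_congr_left
    intro t ht
    rw [List.mem_range] at ht
    have : okadaGenN n ((i : ℕ) - t) = gN n ((i : ℕ) - t - 1) := rfl
    rw [this]
    congr 1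
    omega
  rw [step1]
  unfold wordC
  rw [List.map_flatMap]
  apply List.flatMap_congr
  intro i hi
  rw [List.mem_range] at hi
  have hle : c i ≤ i := by
    rw [hc]
    rcases Nat.decLt i (n+1) with h' | h'
    · simp only [dif_neg h']; omega
    · simp only [dif_pos h']
      have := permCode_le σ ⟨i, h'⟩
      exact this
  rw [runL_eq i (c i) hle, List.map_map]
  rfl


end Okd

/-- Every element of the Okada monoid `O_N` equals `e_σ` for a unique permutation
`σ ∈ S_N`; consequently `O_N` has cardinality `N!`. -/
theorem okadaMonoid_card (N : ℕ) :
    Function.Bijective (okadaElt (N := N)) ∧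
      Nat.card (OkadaMonoid (N - 1)) = N.factorial := by
  cases N with
  | zero =>
    have hall : ∀ x : OkadaMonoid 0, x = 1 := by
      intro x
      obtain ⟨l, hl, rfl⟩ := Okd.exists_pN 0 x
      cases l with
      | nil => rfl
      | cons a t => exact absurd (hl a (by simp)) (by omega)
    refine ⟨⟨?_, ?_⟩, ?_⟩
    · intro σ τ _
      apply Equiv.ext
      intro i
      exact i.elim0
    · intro x
      refine ⟨1, ?_⟩
      rw [hall x, hall (okadaElt (N := 0) 1)]
    · haveI : Unique (OkadaMonoid 0) := ⟨⟨1⟩, fun x => hall x⟩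
      rw [Nat.card_unique]
      rfl
  | succ n =>
    obtain ⟨mS, mI⟩ := Okd.main n
    -- the code type
    let Cd := ∀ i : Fin (n+1), Fin ((i : ℕ) + 1)
    let PC : Equiv.Perm (Fin (n+1)) → Cd := fun σ i =>
      ⟨permCode σ i, by have := Okd.permCode_le σ i; omega⟩
    let cdF : Cd → ℕ → ℕ := fun d i => if h : i < n+1 then (d ⟨i, h⟩ : ℕ) else 0
    have hcdF_val : ∀ d : Cd, ∀ i, cdF d i ≤ i := by
      intro d i
      show (if h : i < n+1 then (d ⟨i, h⟩ : ℕ) else 0) ≤ i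
      split
      · next h =>
          have h1 := (d ⟨i, h⟩).isLt
          have h2 : (⟨i, h⟩ : Fin (n+1)).val = i := rfl
          omega
      · omega
    let E : Cd → OkadaMonoid n := fun d => Okd.gw n (cdF d)
    have hE : ∀ σ, okadaElt σ = E (PC σ) := by
      intro σ
      rw [Okd.okadaElt_eq_gw n σ]
    have hEinj : Function.Injective E := by
      intro d d' h
      have key := mI (cdF d) (cdF d') (hcdF_val d) (hcdF_val d') h
      funext j
      have hj := key j.val (by omega)
      apply Fin.ext
      have h1 : cdF d j.val = (d j : ℕ) := by
        show (if h : (j:ℕ) < n+1 then (d ⟨j, h⟩ : ℕ) else 0) = (d j : ℕ)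
        rw [dif_pos j.isLt, Fin.eta]
      have h2 : cdF d' j.val = (d' j : ℕ) := by
        show (if h : (j:ℕ) < n+1 then (d' ⟨j, h⟩ : ℕ) else 0) = (d' j : ℕ)
        rw [dif_pos j.isLt, Fin.eta]
      rw [← h1, ← h2, hj]
    have hEsurj : Function.Surjective E := by
      intro x
      obtain ⟨c, hc, rfl⟩ := mS x
      refine ⟨fun i => ⟨c i.val, by have := hc i.val; omega⟩, ?_⟩
      show Okd.gw n _ = Okd.gw n c
      unfold Okd.gw
      congr 1
      apply Okd.wordC_congr
      intro i hi
      show (if h : i < n+1 then c i else 0) = c i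
      rw [dif_pos hi]
    have hPCsurj : Function.Surjective PC := by
      intro d
      obtain ⟨σ, hσ⟩ := Okd.lehmer (n+1) (cdF d) (hcdF_val d)
      refine ⟨σ, ?_⟩
      funext i
      apply Fin.ext
      show permCode σ i = (d i : ℕ)
      rw [hσ i]
      show (if h : (i:ℕ) < n+1 then (d ⟨i, h⟩ : ℕ) else 0) = (d i : ℕ)
      rw [dif_pos i.isLt, Fin.eta]
    have hcard : Fintype.card (Equiv.Perm (Fin (n+1))) = Fintype.card Cd := by
      rw [Fintype.card_perm, Fintype.card_fin]
      show (n+1).factorial = Fintype.card (∀ i : Fin (n+1), Fin ((i : ℕ) + 1))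
      rw [Fintype.card_pi]
      simp only [Fintype.card_fin]
      rw [Fin.prod_univ_eq_prod_range (fun i => i + 1) (n+1),
        Finset.prod_range_add_one_eq_factorial]
    have hPCbij : Function.Bijective PC :=
      (Fintype.bijective_iff_surjective_and_card PC).mpr ⟨hPCsurj, hcard⟩
    have hEbij : Function.Bijective E := ⟨hEinj, hEsurj⟩
    have hcomp : okadaElt (N := n+1) = E ∘ PC := funext hE
    have hbij : Function.Bijective (okadaElt (N := n+1)) := by
      rw [hcomp]
      exact hEbij.comp hPCbij
    refine ⟨hbij, ?_⟩
    show Nat.card (OkadaMonoid n) = (n+1).factorial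
    have h1 : Nat.card (Equiv.Perm (Fin (n+1))) = Nat.card (OkadaMonoid n) :=
      Nat.card_eq_of_bijective _ hbij
    rw [← h1, Nat.card_eq_fintype_card, Fintype.card_perm, Fintype.card_fin]
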